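/- arXiv:math/0408123 — 2 statements merged into one kernel-verified Lean document; each statement's English description precedes it below -/
import Mathlib

section
/- The map μ_N sending an automorphism ρ of R[[t]] (with ρ(t) = ∑_{n≥1} c_n t^n, c_1 a unit) that preserves the subalgebra R[[t^N]] to the induced automorphism of R[[t^N]] is a surjective group homomorphism whose kernel is cyclic of order N, generated by t ↦ εt for ε a primitive N-th root of unity. Hence there is a short exact sequence 1 → Z/NZ → Aut_N(O_R) → Aut(O_R) → 1. -/
open PowerSeries

/-- The `(t)`-adic topology on `ℂ[[t]]`. -/
noncomputable def tadic : TopologicalSpace (PowerSeries ℂ) :=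
  (Ideal.span {(PowerSeries.X : PowerSeries ℂ)}).adicTopology

/-- A continuous `ℂ`-algebra automorphism of `ℂ[[t]]` preserving the ideal `(t)`,
i.e. an element of `Aut(O)`. -/
def IsAutO (σ : PowerSeries ℂ ≃ₐ[ℂ] PowerSeries ℂ) : Prop :=
  @Continuous _ _ tadic tadic σ ∧
    ∀ f ∈ Ideal.span {(PowerSeries.X : PowerSeries ℂ)},
      σ f ∈ Ideal.span {(PowerSeries.X : PowerSeries ℂ)}

/-- An element of `Aut_N(O)`: an element of `Aut(O)` which moreover preserves the
subalgebra `ℂ[[t^N]]`, realized as the range of the embedding `ι : ℂ[[z]] → ℂ[[t]]`,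
`z ↦ t^N`. -/
def IsAutNO (ι : PowerSeries ℂ →ₐ[ℂ] PowerSeries ℂ)
    (σ : PowerSeries ℂ ≃ₐ[ℂ] PowerSeries ℂ) : Prop :=
  IsAutO σ ∧ ∀ f, σ (ι f) ∈ Set.range ι

-- generic binomial lemma
lemma key_binom {A : Type*} [CommRing A] (p q : A) (N : ℕ) :
    ∃ r, (p + q) ^ (N + 1) = p ^ (N + 1) + (N + 1 : ℕ) * p ^ N * q + q ^ 2 * r := by
  induction N with
  | zero => exact ⟨0, by ring⟩
  | succ n ih =>
    obtain ⟨r, hr⟩ := ih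
    refine ⟨r * p + r * q + (n + 1) * p ^ n, ?_⟩
    rw [pow_succ, hr]
    push_cast
    ring

lemma Xpow_dvd_sub_trunc (f : PowerSeries ℂ) (n : ℕ) :
    (X : PowerSeries ℂ) ^ n ∣ f - (trunc n f : Polynomial ℂ) := by
  rw [X_pow_dvd_iff]
  intro m hm
  simp [Polynomial.coeff_coe, coeff_trunc, hm]

lemma dvd_aeval {s : PowerSeries ℂ} (hs : constantCoeff s = 0) (p : Polynomial ℂ)
    (n : ℕ) (h : (X : PowerSeries ℂ) ^ n ∣ (p : PowerSeries ℂ)) :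
    (X : PowerSeries ℂ) ^ n ∣ Polynomial.aeval s p := by
  rw [X_pow_dvd_iff] at h
  have hp : (Polynomial.X : Polynomial ℂ) ^ n ∣ p := by
    rw [Polynomial.X_pow_dvd_iff]
    intro d hd
    simpa [Polynomial.coeff_coe] using h d hd
  obtain ⟨q, rfl⟩ := hp
  rw [map_mul, map_pow, Polynomial.aeval_X]
  exact (pow_dvd_pow_of_dvd (X_dvd_iff.2 hs) n).mul_right _

lemma dvd_apply (φ : PowerSeries ℂ →ₐ[ℂ] PowerSeries ℂ)
    (hφ : constantCoeff (φ X) = 0) {f : PowerSeries ℂ} (n : ℕ)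
    (h : (X : PowerSeries ℂ) ^ n ∣ f) : (X : PowerSeries ℂ) ^ n ∣ φ f := by
  obtain ⟨g, rfl⟩ := h
  rw [map_mul, map_pow]
  exact (pow_dvd_pow_of_dvd (X_dvd_iff.2 hφ) n).mul_right _

lemma coeff_eq_of_dvd {f g : PowerSeries ℂ} {n : ℕ}
    (h : (X : PowerSeries ℂ) ^ (n + 1) ∣ f - g) : coeff n f = coeff n g := by
  have := (X_pow_dvd_iff.1 h) n (lt_add_one n)
  rw [map_sub] at this
  exact sub_eq_zero.1 this

lemma mapC (φ : PowerSeries ℂ →ₐ[ℂ] PowerSeries ℂ) (a : ℂ) : φ (C a) = C a := by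
  simpa [PowerSeries.algebraMap_apply] using φ.commutes a

lemma algHom_coe (φ : PowerSeries ℂ →ₐ[ℂ] PowerSeries ℂ) (p : Polynomial ℂ) :
    φ (p : PowerSeries ℂ) = Polynomial.aeval (φ X) p := by
  have h : φ.comp (Polynomial.coeToPowerSeries.algHom ℂ) = Polynomial.aeval (φ X) := by
    apply Polynomial.algHom_ext
    simp [Polynomial.coeToPowerSeries.algHom_apply]
  have h2 := DFunLike.congr_fun h p
  simpa [Polynomial.coeToPowerSeries.algHom_apply] using h2

lemma algHom_ext' {φ ψ : PowerSeries ℂ →ₐ[ℂ] PowerSeries ℂ}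
    (h0 : constantCoeff (φ X) = 0) (hX : φ X = ψ X) : φ = ψ := by
  have h0' : constantCoeff (ψ X) = 0 := by rw [← hX]; exact h0
  apply AlgHom.ext
  intro f
  apply PowerSeries.ext
  intro n
  have h1 : coeff n (φ f) = coeff n (φ (trunc (n + 1) f : Polynomial ℂ)) := by
    apply coeff_eq_of_dvd
    have := dvd_apply φ h0 (n + 1) (Xpow_dvd_sub_trunc f (n + 1))
    rwa [map_sub] at this
  have h2 : coeff n (ψ f) = coeff n (ψ (trunc (n + 1) f : Polynomial ℂ)) := by
    apply coeff_eq_of_dvd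
    have := dvd_apply ψ h0' (n + 1) (Xpow_dvd_sub_trunc f (n + 1))
    rwa [map_sub] at this
  rw [h1, h2, algHom_coe, algHom_coe, hX]

lemma constantCoeff_apply (φ : PowerSeries ℂ →ₐ[ℂ] PowerSeries ℂ)
    (hφ : constantCoeff (φ X) = 0) (f : PowerSeries ℂ) :
    constantCoeff (φ f) = constantCoeff f := by
  set a := constantCoeff f with ha
  have h1 : (X : PowerSeries ℂ) ^ 1 ∣ f - C a := by
    rw [pow_one, X_dvd_iff, map_sub, constantCoeff_C, ← ha, sub_self]
  have h2 := dvd_apply φ hφ 1 h1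
  rw [pow_one, map_sub, mapC, X_dvd_iff, map_sub, constantCoeff_C] at h2
  exact sub_eq_zero.1 h2

noncomputable def substF (s f : PowerSeries ℂ) : PowerSeries ℂ :=
  PowerSeries.mk fun n => coeff n (Polynomial.aeval s (trunc (n + 1) f))

lemma coeff_substF' (s f : PowerSeries ℂ) (n : ℕ) :
    coeff n (substF s f) = coeff n (Polynomial.aeval s (trunc (n + 1) f)) := by
  rw [substF, coeff_mk]

lemma coeff_substF {s : PowerSeries ℂ} (hs : constantCoeff s = 0) (f : PowerSeries ℂ)
    {n m : ℕ} (h : n < m) :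
    coeff n (substF s f) = coeff n (Polynomial.aeval s (trunc m f)) := by
  rw [coeff_substF']
  apply coeff_eq_of_dvd
  rw [← map_sub]
  apply dvd_aeval hs
  rw [X_pow_dvd_iff]
  intro d hd
  have hdm : d < m := lt_of_lt_of_le hd h
  simp [Polynomial.coeff_coe, coeff_trunc, hd, hdm]

lemma substF_mul {s : PowerSeries ℂ} (hs : constantCoeff s = 0) (f g : PowerSeries ℂ) :
    substF s (f * g) = substF s f * substF s g := by
  apply PowerSeries.ext
  intro n
  have h1 : coeff n (substF s (f * g)) =
      coeff n (Polynomial.aeval s (trunc (n + 1) f * trunc (n + 1) g)) := by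
    rw [coeff_substF hs (f * g) (lt_add_one n)]
    apply coeff_eq_of_dvd
    rw [← map_sub]
    apply dvd_aeval hs
    rw [X_pow_dvd_iff]
    intro d hd
    rw [Polynomial.coeff_coe, Polynomial.coeff_sub, sub_eq_zero, coeff_trunc, if_pos hd,
      Polynomial.coeff_mul, PowerSeries.coeff_mul]
    apply Finset.sum_congr rfl
    rintro ⟨i, j⟩ hij
    rw [Finset.HasAntidiagonal.mem_antidiagonal] at hij
    have hi : i < n + 1 := lt_of_le_of_lt (hij ▸ Nat.le_add_right i j) hd
    have hj : j < n + 1 := lt_of_le_of_lt (hij ▸ Nat.le_add_left j i) hd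
    rw [coeff_trunc, if_pos hi, coeff_trunc, if_pos hj]
  rw [h1, map_mul, PowerSeries.coeff_mul, PowerSeries.coeff_mul]
  apply Finset.sum_congr rfl
  rintro ⟨i, j⟩ hij
  rw [Finset.HasAntidiagonal.mem_antidiagonal] at hij
  have hi : i < n + 1 := lt_of_le_of_lt (hij ▸ Nat.le_add_right i j) (lt_add_one n)
  have hj : j < n + 1 := lt_of_le_of_lt (hij ▸ Nat.le_add_left j i) (lt_add_one n)
  rw [coeff_substF hs f hi, coeff_substF hs g hj]

lemma algebraMap_C (a : ℂ) : (algebraMap ℂ (PowerSeries ℂ)) a = C a := by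
  rw [PowerSeries.algebraMap_apply]
  simp

noncomputable def substAH (s : PowerSeries ℂ) (hs : constantCoeff s = 0) :
    PowerSeries ℂ →ₐ[ℂ] PowerSeries ℂ where
  toFun := substF s
  map_one' := by
    apply PowerSeries.ext
    intro n
    rw [coeff_substF', trunc_one, map_one]
  map_mul' := substF_mul hs
  map_zero' := by
    apply PowerSeries.ext
    intro n
    rw [coeff_substF']
    simp [map_zero]
  map_add' := fun f g => by
    apply PowerSeries.ext
    intro n
    rw [map_add, coeff_substF', coeff_substF', coeff_substF', map_add, map_add, map_add]
  commutes' := fun a => by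
    rw [algebraMap_C]
    apply PowerSeries.ext
    intro n
    rw [coeff_substF', trunc_C, Polynomial.aeval_C, algebraMap_C]

lemma substAH_X {s : PowerSeries ℂ} (hs : constantCoeff s = 0) : substAH s hs X = s := by
  apply PowerSeries.ext
  intro n
  show coeff n (substF s X) = coeff n s
  rw [coeff_substF hs X (by omega : n < n + 2), trunc_X, Polynomial.aeval_X]

lemma exists_X_pow_mul {f : PowerSeries ℂ} (hf : f ≠ 0) :
    ∃ n g, constantCoeff g ≠ 0 ∧ f = (X : PowerSeries ℂ) ^ n * g := by
  have hex : ∃ n, coeff n f ≠ 0 := by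
    by_contra h
    push_neg at h
    exact hf (PowerSeries.ext fun n => by simp [h n])
  refine ⟨Nat.find hex, PowerSeries.mk fun k => coeff (Nat.find hex + k) f, ?_, ?_⟩
  · simpa using Nat.find_spec hex
  · apply PowerSeries.ext
    intro m
    rcases le_or_gt (Nat.find hex) m with h | h
    · obtain ⟨d, rfl⟩ := Nat.exists_eq_add_of_le h
      rw [add_comm (Nat.find hex) d, coeff_X_pow_mul, coeff_mk, add_comm d (Nat.find hex)]
    · have h0 : coeff m f = 0 := by simpa using Nat.find_min hex h
      rw [h0]
      have hdvd : (X : PowerSeries ℂ) ^ Nat.find hex ∣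
          X ^ Nat.find hex * PowerSeries.mk fun k => coeff (Nat.find hex + k) f :=
        Dvd.intro _ rfl
      exact ((X_pow_dvd_iff.1 hdvd) m h).symm

lemma X_mul_decomp {s : PowerSeries ℂ} (hs : constantCoeff s = 0) :
    ∃ u, s = X * u ∧ constantCoeff u = coeff 1 s := by
  obtain ⟨u, hu⟩ := X_dvd_iff.2 hs
  refine ⟨u, hu, ?_⟩
  rw [hu]
  have := coeff_succ_X_mul 0 u
  rw [this]
  simp

lemma coeff_self_pow {s : PowerSeries ℂ} (hs : constantCoeff s = 0) (n : ℕ) :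
    coeff n (s ^ n) = (coeff 1 s) ^ n := by
  obtain ⟨u, hu, hcu⟩ := X_mul_decomp hs
  rw [← hcu, hu, mul_pow]
  have h1 : coeff n ((X : PowerSeries ℂ) ^ n * u ^ n) = coeff 0 (u ^ n) := by
    have := coeff_X_pow_mul (u ^ n) n 0
    simpa using this
  rw [h1, coeff_zero_eq_constantCoeff_apply, map_pow]

lemma subst_injective (φ : PowerSeries ℂ →ₐ[ℂ] PowerSeries ℂ)
    (h0 : constantCoeff (φ X) = 0) (h1 : coeff 1 (φ X) ≠ 0) :
    Function.Injective φ := by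
  rw [injective_iff_map_eq_zero]
  intro f hf
  by_contra hne
  obtain ⟨n, g, hg0, rfl⟩ := exists_X_pow_mul hne
  obtain ⟨u, hu, hcu⟩ := X_mul_decomp h0
  rw [map_mul, map_pow, hu, mul_pow, mul_assoc] at hf
  have hX : (X : PowerSeries ℂ) ^ n ≠ 0 := pow_ne_zero n X_ne_zero
  have hunit : constantCoeff (u ^ n * φ g) ≠ 0 := by
    rw [map_mul, map_pow, hcu, constantCoeff_apply φ h0]
    exact mul_ne_zero (pow_ne_zero n h1) hg0
  have : u ^ n * φ g ≠ 0 := fun h => hunit (by rw [h, map_zero])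
  exact (mul_ne_zero hX this) hf

noncomputable def approx (φ : PowerSeries ℂ →ₐ[ℂ] PowerSeries ℂ) (g : PowerSeries ℂ) (c : ℂ) :
    ℕ → PowerSeries ℂ
  | 0 => 0
  | n + 1 => approx φ g c n +
      C ((coeff n g - coeff n (φ (approx φ g c n))) / c ^ n) * X ^ n

lemma coeff_approx (φ : PowerSeries ℂ →ₐ[ℂ] PowerSeries ℂ) (g : PowerSeries ℂ) (c : ℂ)
    (n k : ℕ) : coeff k (approx φ g c n) =
      if k < n then (coeff k g - coeff k (φ (approx φ g c k))) / c ^ k else 0 := by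
  induction n with
  | zero => simp [approx]
  | succ n ih =>
    rw [approx, map_add, ih, coeff_C_mul, coeff_X_pow]
    rcases lt_trichotomy k n with h | h | h
    · rw [if_pos h, if_neg (show ¬ k = n by omega), mul_zero, add_zero,
        if_pos (show k < n + 1 by omega)]
    · subst h
      rw [if_neg (lt_irrefl k), if_pos rfl, mul_one, zero_add, if_pos (Nat.lt_succ_self k)]
    · rw [if_neg (show ¬ k < n by omega), if_neg (show ¬ k = n by omega), mul_zero, add_zero,
        if_neg (show ¬ k < n + 1 by omega)]

lemma subst_surjective (φ : PowerSeries ℂ →ₐ[ℂ] PowerSeries ℂ)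
    (h0 : constantCoeff (φ X) = 0) (h1 : coeff 1 (φ X) ≠ 0) :
    Function.Surjective φ := by
  intro g
  set c := coeff 1 (φ X) with hc
  set a : ℕ → ℂ := fun k => (coeff k g - coeff k (φ (approx φ g c k))) / c ^ k with ha
  refine ⟨PowerSeries.mk a, ?_⟩
  apply PowerSeries.ext
  intro n
  have hd : (X : PowerSeries ℂ) ^ (n + 1) ∣ PowerSeries.mk a - approx φ g c (n + 1) := by
    rw [X_pow_dvd_iff]
    intro m hm
    rw [map_sub, coeff_mk, coeff_approx, if_pos hm, sub_self]
  have step1 : coeff n (φ (PowerSeries.mk a)) = coeff n (φ (approx φ g c (n + 1))) := by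
    apply coeff_eq_of_dvd
    have := dvd_apply φ h0 (n + 1) hd
    rwa [map_sub] at this
  have step2 : φ (approx φ g c (n + 1)) = φ (approx φ g c n) + C (a n) * (φ X) ^ n := by
    rw [approx, map_add, map_mul, map_pow, mapC]
  have step3 : coeff n (C (a n) * (φ X) ^ n) = a n * c ^ n := by
    rw [coeff_C_mul, coeff_self_pow h0]
  have hcn : (c : ℂ) ^ n ≠ 0 := pow_ne_zero n h1
  rw [step1, step2, map_add, step3]
  have hh : a n * c ^ n = coeff n g - coeff n (φ (approx φ g c n)) := by
    simp only [ha]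
    exact div_mul_cancel₀ _ hcn
  rw [hh]
  ring

lemma subst_bijective (φ : PowerSeries ℂ →ₐ[ℂ] PowerSeries ℂ)
    (h0 : constantCoeff (φ X) = 0) (h1 : coeff 1 (φ X) ≠ 0) :
    Function.Bijective φ :=
  ⟨subst_injective φ h0 h1, subst_surjective φ h0 h1⟩

noncomputable def rt (u : PowerSeries ℂ) (c : ℂ) (N : ℕ) : ℕ → PowerSeries ℂ
  | 0 => C c
  | n + 1 => rt u c N n +
      C ((coeff (n + 1) u - coeff (n + 1) ((rt u c N n) ^ N)) / (N * c ^ (N - 1))) *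
        X ^ (n + 1)

lemma coeff_rt_stable (u : PowerSeries ℂ) (c : ℂ) (N : ℕ) {k n : ℕ} (h : k ≤ n) :
    coeff k (rt u c N n) = coeff k (rt u c N k) := by
  induction n with
  | zero => cases Nat.le_zero.1 h; rfl
  | succ n ih =>
    rcases Nat.lt_or_ge k (n + 1) with h' | h'
    · rw [rt, map_add, coeff_C_mul, coeff_X_pow, if_neg (by omega), mul_zero, add_zero,
        ih (by omega)]
    · have hk : k = n + 1 := le_antisymm h h'
      subst hk
      rfl

lemma constantCoeff_rt (u : PowerSeries ℂ) (c : ℂ) (N : ℕ) (n : ℕ) :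
    constantCoeff (rt u c N n) = c := by
  rw [← coeff_zero_eq_constantCoeff_apply, coeff_rt_stable u c N (Nat.zero_le n), rt]
  simp

lemma rt_spec (u : PowerSeries ℂ) (c : ℂ) (M : ℕ) (hc : c ≠ 0)
    (hcu : c ^ (M + 1) = constantCoeff u) (n : ℕ) :
    coeff n ((rt u c (M + 1) n) ^ (M + 1)) = coeff n u := by
  cases n with
  | zero =>
    rw [rt, ← map_pow, coeff_zero_eq_constantCoeff_apply, constantCoeff_C, hcu,
      coeff_zero_eq_constantCoeff_apply]
  | succ n =>
    set p := rt u c (M + 1) n with hp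
    set b := (coeff (n + 1) u - coeff (n + 1) (p ^ (M + 1))) / ((M + 1 : ℕ) * c ^ M) with hb
    have hrt : rt u c (M + 1) (n + 1) = p + C b * X ^ (n + 1) := by
      rw [rt, hb, hp]
      norm_num
    obtain ⟨r, hr⟩ := key_binom p (C b * X ^ (n + 1)) M
    rw [hrt, hr]
    have e1 : coeff (n + 1) (((M + 1 : ℕ) : PowerSeries ℂ) * p ^ M * (C b * X ^ (n + 1))) =
        ((M + 1 : ℕ) : ℂ) * c ^ M * b := by
      have harr : ((M + 1 : ℕ) : PowerSeries ℂ) * p ^ M * (C b * X ^ (n + 1)) =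
          (((M + 1 : ℕ) : PowerSeries ℂ) * p ^ M * C b) * X ^ (n + 1) := by ring
      rw [harr]
      have := coeff_mul_X_pow (((M + 1 : ℕ) : PowerSeries ℂ) * p ^ M * C b) (n + 1) 0
      rw [zero_add] at this
      rw [this, coeff_zero_eq_constantCoeff_apply, map_mul, map_mul, map_pow, constantCoeff_C,
        map_natCast, constantCoeff_rt]
    have e2 : coeff (n + 1) ((C b * X ^ (n + 1)) ^ 2 * r) = 0 := by
      have hdvd : (X : PowerSeries ℂ) ^ (n + 2) ∣ (C b * X ^ (n + 1)) ^ 2 * r := by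
        have : (C b * X ^ (n + 1)) ^ 2 * r =
            (X : PowerSeries ℂ) ^ (2 * (n + 1)) * ((C b) ^ 2 * r) := by ring
        rw [this]
        exact ((pow_dvd_pow (X : PowerSeries ℂ) (by omega)).mul_right _)
      exact (X_pow_dvd_iff.1 hdvd) (n + 1) (by omega)
    have e3 : b * ((M + 1 : ℕ) * c ^ M) = coeff (n + 1) u - coeff (n + 1) (p ^ (M + 1)) := by
      rw [hb]
      apply div_mul_cancel₀
      exact mul_ne_zero (Nat.cast_ne_zero.2 (Nat.succ_ne_zero M)) (pow_ne_zero M hc)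
    rw [map_add, map_add, e1, e2, add_zero]
    have : ((M + 1 : ℕ) : ℂ) * c ^ M * b = b * ((M + 1 : ℕ) * c ^ M) := by ring
    rw [this, e3]
    ring

lemma exists_nth_root (u : PowerSeries ℂ) (hu : constantCoeff u ≠ 0) (N : ℕ) (hN : 0 < N) :
    ∃ w, constantCoeff w ≠ 0 ∧ w ^ N = u := by
  obtain ⟨c, hc⟩ := IsAlgClosed.exists_pow_nat_eq (constantCoeff u) hN
  have hc0 : c ≠ 0 := fun h => hu (by rw [← hc, h, zero_pow hN.ne'])
  obtain ⟨M, rfl⟩ : ∃ M, N = M + 1 := ⟨N - 1, by omega⟩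
  set w := PowerSeries.mk (fun n => coeff n (rt u c (M + 1) n)) with hw
  have hcw : constantCoeff w = c := by
    rw [hw, ← coeff_zero_eq_constantCoeff_apply, coeff_mk, rt]
    simp
  refine ⟨w, by rw [hcw]; exact hc0, ?_⟩
  apply PowerSeries.ext
  intro n
  have hdvd : (X : PowerSeries ℂ) ^ (n + 1) ∣ w - rt u c (M + 1) n := by
    rw [X_pow_dvd_iff]
    intro m hm
    rw [map_sub, hw, coeff_mk, coeff_rt_stable u c (M + 1) (by omega : m ≤ n), sub_self]
  have h2 : coeff n (w ^ (M + 1)) = coeff n ((rt u c (M + 1) n) ^ (M + 1)) :=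
    coeff_eq_of_dvd (dvd_trans hdvd (sub_dvd_pow_sub_pow _ _ _))
  rw [h2, rt_spec u c M hc0 hc n]

lemma cont_of (φ : PowerSeries ℂ →ₐ[ℂ] PowerSeries ℂ)
    (h0 : constantCoeff (φ X) = 0) : @Continuous _ _ tadic tadic φ := by
  have key : ∀ (n : ℕ) (g : PowerSeries ℂ), g ∈ (Ideal.span {(X : PowerSeries ℂ)}) ^ n →
      φ g ∈ (Ideal.span {(X : PowerSeries ℂ)}) ^ n := by
    intro n g hg
    rw [Ideal.span_singleton_pow, Ideal.mem_span_singleton] at hg ⊢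
    exact dvd_apply φ h0 n hg
  rw [show tadic = (Ideal.span {(X : PowerSeries ℂ)}).adicTopology from rfl]
  letI := (Ideal.span {(X : PowerSeries ℂ)}).adicTopology
  rw [continuous_iff_continuousAt]
  intro x
  rw [ContinuousAt, (Ideal.hasBasis_nhds_adic _ x).tendsto_iff (Ideal.hasBasis_nhds_adic _ (φ x))]
  rintro n -
  refine ⟨n, trivial, fun y hy => ?_⟩
  obtain ⟨g, hg, rfl⟩ := hy
  exact ⟨φ g, key n g hg, (map_add φ x g).symm⟩

lemma ccoeff_equiv_X (σ : PowerSeries ℂ ≃ₐ[ℂ] PowerSeries ℂ) : constantCoeff (σ X) = 0 := by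
  by_contra h
  have h1 : IsUnit (σ X) := isUnit_iff_constantCoeff.2 (isUnit_iff_ne_zero.2 h)
  have h2 : IsUnit (X : PowerSeries ℂ) := by
    have := h1.map σ.symm
    rwa [AlgEquiv.symm_apply_apply] at this
  have h3 := isUnit_iff_constantCoeff.1 h2
  rw [constantCoeff_X] at h3
  exact not_isUnit_zero h3

lemma coeff_one_equiv_X (σ : PowerSeries ℂ ≃ₐ[ℂ] PowerSeries ℂ) : coeff 1 (σ X) ≠ 0 := by
  intro hc
  have h0 := ccoeff_equiv_X σ
  have hs : constantCoeff (σ.symm X) = 0 := ccoeff_equiv_X σ.symm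
  obtain ⟨h, hh⟩ := X_dvd_iff.2 hs
  have e1 : σ (σ.symm X) = X := σ.apply_symm_apply X
  rw [hh, map_mul] at e1
  have hdvd : (X : PowerSeries ℂ) ^ 2 ∣ σ X := by
    rw [X_pow_dvd_iff]
    intro m hm
    interval_cases m
    · simpa using h0
    · exact hc
  have hdvd2 : (X : PowerSeries ℂ) ^ 2 ∣ (X : PowerSeries ℂ) := by
    conv_rhs => rw [← e1]
    exact hdvd.mul_right _
  have := (X_pow_dvd_iff.1 hdvd2) 1 (by omega)
  rw [coeff_one_X] at this
  exact one_ne_zero this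

lemma isAutO_of (σ : PowerSeries ℂ ≃ₐ[ℂ] PowerSeries ℂ) : IsAutO σ := by
  constructor
  · exact cont_of σ.toAlgHom (ccoeff_equiv_X σ)
  · intro f hf
    rw [Ideal.mem_span_singleton] at hf ⊢
    obtain ⟨g, rfl⟩ := hf
    rw [map_mul]
    exact (X_dvd_iff.2 (ccoeff_equiv_X σ)).mul_right _

lemma equiv_eq_of_X {σ₁ σ₂ : PowerSeries ℂ ≃ₐ[ℂ] PowerSeries ℂ} (h : σ₁ X = σ₂ X) :
    σ₁ = σ₂ := by
  have h2 : σ₁.toAlgHom = σ₂.toAlgHom := algHom_ext' (ccoeff_equiv_X σ₁) h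
  exact AlgEquiv.ext fun f => AlgHom.congr_fun h2 f

lemma kernel_eps {N : ℕ} (hN : 0 < N) {ι : PowerSeries ℂ →ₐ[ℂ] PowerSeries ℂ}
    (hιX : ι PowerSeries.X = PowerSeries.X ^ N) (σ : PowerSeries ℂ ≃ₐ[ℂ] PowerSeries ℂ)
    (hk : (σ.toAlgHom).comp ι = ι) :
    ∃ ε : ℂ, ε ^ N = 1 ∧ σ PowerSeries.X = PowerSeries.C ε * PowerSeries.X := by
  have hXN : σ ((X : PowerSeries ℂ) ^ N) = X ^ N := by
    have h := AlgHom.congr_fun hk X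
    rw [AlgHom.comp_apply, hιX] at h
    exact h
  obtain ⟨u, hu, hcu⟩ := X_mul_decomp (ccoeff_equiv_X σ)
  have huN : u ^ N = 1 := by
    have h1 : (X : PowerSeries ℂ) ^ N * u ^ N = X ^ N * 1 := by
      rw [mul_one, ← mul_pow, ← hu, ← map_pow, hXN]
    exact mul_left_cancel₀ (pow_ne_zero N X_ne_zero) h1
  set a := constantCoeff u with ha
  have haN : a ^ N = 1 := by rw [ha, ← map_pow, huN, map_one]
  have ha0 : a ≠ 0 := fun h => one_ne_zero (by rw [← haN, h, zero_pow hN.ne'] : (1 : ℂ) = 0)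
  have hua : u = C a := by
    by_contra hne
    have hv : u - C a ≠ 0 := sub_ne_zero.2 hne
    obtain ⟨d, h', hh0, hdec⟩ := exists_X_pow_mul hv
    have hd1 : 1 ≤ d := by
      by_contra hd
      have hd0 : d = 0 := by omega
      subst hd0
      have := congrArg (constantCoeff) hdec
      rw [map_sub, constantCoeff_C, ← ha, sub_self, pow_zero, one_mul] at this
      exact hh0 this.symm
    obtain ⟨M, rfl⟩ : ∃ M, N = M + 1 := ⟨N - 1, by omega⟩
    obtain ⟨r, hr⟩ := key_binom (C a) (u - C a) M
    have hsum : C a + (u - C a) = u := by ring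
    rw [hsum, huN] at hr
    have hCa : (C a) ^ (M + 1) = 1 := by rw [← map_pow, haN, map_one]
    rw [hCa] at hr
    have hzero : ((M + 1 : ℕ) : PowerSeries ℂ) * (C a) ^ M * (u - C a) +
        (u - C a) ^ 2 * r = 0 := by linear_combination -hr
    rw [hdec] at hzero
    have e1 : coeff d (((M + 1 : ℕ) : PowerSeries ℂ) * (C a) ^ M *
        ((X : PowerSeries ℂ) ^ d * h')) = ((M + 1 : ℕ) : ℂ) * a ^ M * constantCoeff h' := by
      have harr : ((M + 1 : ℕ) : PowerSeries ℂ) * (C a) ^ M * ((X : PowerSeries ℂ) ^ d * h') =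
          (((M + 1 : ℕ) : PowerSeries ℂ) * (C a) ^ M * h') * X ^ d := by ring
      rw [harr]
      have := coeff_mul_X_pow (((M + 1 : ℕ) : PowerSeries ℂ) * (C a) ^ M * h') d 0
      rw [zero_add] at this
      rw [this, coeff_zero_eq_constantCoeff_apply, map_mul, map_mul, map_pow, constantCoeff_C,
        map_natCast]
    have e2 : coeff d (((X : PowerSeries ℂ) ^ d * h') ^ 2 * r) = 0 := by
      have hdvd : (X : PowerSeries ℂ) ^ (d + 1) ∣ ((X : PowerSeries ℂ) ^ d * h') ^ 2 * r := by
        have harr : ((X : PowerSeries ℂ) ^ d * h') ^ 2 * r =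
            (X : PowerSeries ℂ) ^ (2 * d) * (h' ^ 2 * r) := by ring
        rw [harr]
        exact (pow_dvd_pow (X : PowerSeries ℂ) (by omega)).mul_right _
      exact (X_pow_dvd_iff.1 hdvd) d (by omega)
    have := congrArg (coeff d) hzero
    rw [map_add, e1, e2, add_zero, map_zero] at this
    have hne2 : ((M + 1 : ℕ) : ℂ) * a ^ M * constantCoeff h' ≠ 0 :=
      mul_ne_zero (mul_ne_zero (Nat.cast_ne_zero.2 (Nat.succ_ne_zero M)) (pow_ne_zero M ha0)) hh0
    exact hne2 this
  refine ⟨a, haN, ?_⟩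
  rw [hu, hua]
  ring

lemma kernel_of_eps {N : ℕ} (hN : 0 < N) {ι : PowerSeries ℂ →ₐ[ℂ] PowerSeries ℂ}
    (hιX : ι PowerSeries.X = PowerSeries.X ^ N) (σ : PowerSeries ℂ ≃ₐ[ℂ] PowerSeries ℂ)
    {ε : ℂ} (hεN : ε ^ N = 1) (hσX : σ PowerSeries.X = PowerSeries.C ε * PowerSeries.X) :
    (σ.toAlgHom).comp ι = ι := by
  have hX : ((σ.toAlgHom).comp ι) X = ι X := by
    rw [AlgHom.comp_apply, hιX, map_pow]
    show (σ X) ^ N = X ^ N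
    rw [hσX, mul_pow, ← map_pow, hεN, map_one, one_mul]
  apply algHom_ext' _ hX
  rw [hX, hιX, map_pow, constantCoeff_X, zero_pow hN.ne']

noncomputable def epsEquiv (ε : ℂ) (hε : ε ≠ 0) : PowerSeries ℂ ≃ₐ[ℂ] PowerSeries ℂ :=
  AlgEquiv.ofBijective (substAH (C ε * X) (by simp [constantCoeff_X]))
    (subst_bijective _
      (by rw [substAH_X]; simp [constantCoeff_X])
      (by rw [substAH_X]; simp [coeff_one_X]; exact hε))

lemma epsEquiv_X (ε : ℂ) (hε : ε ≠ 0) : epsEquiv ε hε X = C ε * X :=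
  substAH_X (by simp [constantCoeff_X])

lemma exists_tau {N : ℕ} (hN : 0 < N) {ι : PowerSeries ℂ →ₐ[ℂ] PowerSeries ℂ}
    (hιX : ι PowerSeries.X = PowerSeries.X ^ N) (hιinj : Function.Injective ι)
    (σ : PowerSeries ℂ ≃ₐ[ℂ] PowerSeries ℂ) (hσ : ∀ f, σ (ι f) ∈ Set.range ι) :
    ∃ τ : PowerSeries ℂ ≃ₐ[ℂ] PowerSeries ℂ, ι.comp τ.toAlgHom = (σ.toAlgHom).comp ι := by
  have hι0 : constantCoeff (ι X) = 0 := by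
    rw [hιX, map_pow, constantCoeff_X, zero_pow hN.ne']
  have hrange : ∀ f, (σ.toAlgHom).comp ι f ∈ ι.range := by
    intro f
    rw [AlgHom.mem_range]
    obtain ⟨y, hy⟩ := hσ f
    exact ⟨y, hy⟩
  set ψ := ((σ.toAlgHom).comp ι).codRestrict ι.range hrange with hψ
  set τ₀ := ((AlgEquiv.ofInjective ι hιinj).symm.toAlgHom).comp ψ with hτ₀
  have key : ∀ f, ι (τ₀ f) = σ (ι f) := by
    intro f
    have h1 : ι (τ₀ f) = ↑(AlgEquiv.ofInjective ι hιinj (τ₀ f)) :=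
      (AlgEquiv.ofInjective_apply ι hιinj (τ₀ f)).symm
    rw [h1, hτ₀]
    show ((AlgEquiv.ofInjective ι hιinj) ((AlgEquiv.ofInjective ι hιinj).symm (ψ f)) :
      PowerSeries ℂ) = σ (ι f)
    rw [AlgEquiv.apply_symm_apply]
    exact AlgHom.coe_codRestrict _ _ hrange f
  have hσc : ∀ f, constantCoeff (σ f) = constantCoeff f :=
    fun f => constantCoeff_apply σ.toAlgHom (ccoeff_equiv_X σ) f
  have hcc : constantCoeff (τ₀ X) = 0 := by
    have h2 := constantCoeff_apply ι hι0 (τ₀ X)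
    rw [key X, hσc, hι0] at h2
    exact h2.symm
  have hc1 : coeff 1 (τ₀ X) ≠ 0 := by
    intro h
    have hdvd : (X : PowerSeries ℂ) ^ 2 ∣ τ₀ X := by
      rw [X_pow_dvd_iff]
      intro m hm
      interval_cases m
      · simpa using hcc
      · exact h
    obtain ⟨k, hk⟩ := hdvd
    have h3 : ι (τ₀ X) = ((X : PowerSeries ℂ) ^ N) ^ 2 * ι k := by
      rw [hk, map_mul, map_pow, hιX]
    obtain ⟨u, hu, hcu⟩ := X_mul_decomp (ccoeff_equiv_X σ)
    have h5 : σ (ι X) = (X : PowerSeries ℂ) ^ N * u ^ N := by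
      rw [hιX, map_pow]
      show (σ X) ^ N = _
      rw [hu, mul_pow]
    have h6 : (X : PowerSeries ℂ) ^ N * u ^ N =
        (X : PowerSeries ℂ) ^ N * ((X : PowerSeries ℂ) ^ N * ι k) := by
      rw [← h5, ← key X, h3]
      ring
    have h7 : u ^ N = (X : PowerSeries ℂ) ^ N * ι k :=
      mul_left_cancel₀ (pow_ne_zero _ X_ne_zero) h6
    have h8 : constantCoeff u ^ N = 0 := by
      rw [← map_pow, h7, map_mul, map_pow, constantCoeff_X, zero_pow hN.ne', zero_mul]
    have h9 : constantCoeff u ≠ 0 := by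
      rw [hcu]
      exact coeff_one_equiv_X σ
    exact pow_ne_zero N h9 h8
  refine ⟨AlgEquiv.ofBijective τ₀ (subst_bijective τ₀ hcc hc1), ?_⟩
  exact AlgHom.ext fun f => key f

lemma exists_sigma {N : ℕ} (hN : 0 < N) {ι : PowerSeries ℂ →ₐ[ℂ] PowerSeries ℂ}
    (hιX : ι PowerSeries.X = PowerSeries.X ^ N)
    (τ : PowerSeries ℂ ≃ₐ[ℂ] PowerSeries ℂ) :
    ∃ σ : PowerSeries ℂ ≃ₐ[ℂ] PowerSeries ℂ, (∀ f, σ (ι f) ∈ Set.range ι) ∧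
      ι.comp τ.toAlgHom = (σ.toAlgHom).comp ι := by
  have hι0 : constantCoeff (ι X) = 0 := by
    rw [hιX, map_pow, constantCoeff_X, zero_pow hN.ne']
  obtain ⟨v, hv, hcv⟩ := X_mul_decomp (ccoeff_equiv_X τ)
  have hcv0 : constantCoeff v ≠ 0 := by
    rw [hcv]
    exact coeff_one_equiv_X τ
  have hcu : constantCoeff (ι v) ≠ 0 := by
    rw [constantCoeff_apply ι hι0]
    exact hcv0
  obtain ⟨w, hw0, hwN⟩ := exists_nth_root (ι v) hcu N hN
  set s := (X : PowerSeries ℂ) * w with hs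
  have hs0 : constantCoeff s = 0 := by
    rw [hs, map_mul, constantCoeff_X, zero_mul]
  have hs1 : coeff 1 s ≠ 0 := by
    rw [hs]
    have := coeff_succ_X_mul 0 w
    rw [this, coeff_zero_eq_constantCoeff_apply]
    exact hw0
  set σ₀ := substAH s hs0 with hσ₀
  have hσX : σ₀ X = s := substAH_X hs0
  set σ := AlgEquiv.ofBijective σ₀
    (subst_bijective σ₀ (by rw [hσX]; exact hs0) (by rw [hσX]; exact hs1)) with hσdef
  have hσX' : σ X = s := hσX
  have hcomp : ι.comp τ.toAlgHom = (σ.toAlgHom).comp ι := by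
    apply algHom_ext'
    · show constantCoeff (ι (τ X)) = 0
      rw [constantCoeff_apply ι hι0, ccoeff_equiv_X τ]
    · show ι (τ X) = σ (ι X)
      rw [hv, map_mul, hιX, map_pow, hσX', hs, mul_pow, hwN]
  refine ⟨σ, fun f => ?_, hcomp⟩
  exact ⟨τ f, AlgHom.congr_fun hcomp f⟩

/-- The short exact sequence `1 → ℤ/Nℤ → Aut_N(O) → Aut(O) → 1`:  the map `μ_N`
sending `ρ ∈ Aut_N(O)` to the induced automorphism of `ℂ[[t^N]] = ℂ[[z]]` is a
well-defined surjective group homomorphism whose kernel consists exactly of the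
automorphisms `t ↦ εt` with `ε^N = 1`; the kernel is cyclic of order `N`, generated by
`t ↦ εt` for `ε` a primitive `N`-th root of unity. -/
theorem muN_exact_sequence (N : ℕ) (hN : 0 < N)
    (ι : PowerSeries ℂ →ₐ[ℂ] PowerSeries ℂ)
    (hιX : ι PowerSeries.X = PowerSeries.X ^ N)
    (hιcont : @Continuous _ _ tadic tadic ι) (hιinj : Function.Injective ι) :
    -- `μ_N` is well defined: the induced automorphism exists and is unique
    (∀ σ, IsAutNO ι σ → ∃! τ : PowerSeries ℂ ≃ₐ[ℂ] PowerSeries ℂ,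
      IsAutO τ ∧ ι.comp τ.toAlgHom = (σ.toAlgHom).comp ι) ∧
    -- `μ_N` is a group homomorphism: it intertwines composition
    (∀ (σ₁ σ₂ τ₁ τ₂ : PowerSeries ℂ ≃ₐ[ℂ] PowerSeries ℂ), IsAutNO ι σ₁ → IsAutNO ι σ₂ →
      ι.comp τ₁.toAlgHom = (σ₁.toAlgHom).comp ι →
      ι.comp τ₂.toAlgHom = (σ₂.toAlgHom).comp ι →
      ι.comp ((τ₂.trans τ₁).toAlgHom) = ((σ₂.trans σ₁).toAlgHom).comp ι) ∧
    -- `μ_N` is surjective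
    (∀ τ, IsAutO τ → ∃ σ, IsAutNO ι σ ∧ ι.comp τ.toAlgHom = (σ.toAlgHom).comp ι) ∧
    -- the kernel consists exactly of the `t ↦ εt`, `ε^N = 1`
    (∀ σ, IsAutNO ι σ → ((σ.toAlgHom).comp ι = ι ↔
      ∃ ε : ℂ, ε ^ N = 1 ∧ σ PowerSeries.X = PowerSeries.C ε * PowerSeries.X)) ∧
    -- the kernel is cyclic of order `N`, generated by `t ↦ εt`, `ε` primitive
    ({σ : PowerSeries ℂ ≃ₐ[ℂ] PowerSeries ℂ |
        IsAutNO ι σ ∧ (σ.toAlgHom).comp ι = ι}.ncard = N ∧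
      ∀ ε : ℂ, IsPrimitiveRoot ε N →
        ∀ σ, IsAutNO ι σ → (σ.toAlgHom).comp ι = ι →
          ∃ k : ℕ, σ PowerSeries.X = PowerSeries.C (ε ^ k) * PowerSeries.X) := by
  refine ⟨?_, ?_, ?_, ?_, ?_, ?_⟩
  · -- well-definedness
    intro σ hσ
    obtain ⟨τ, hτ⟩ := exists_tau hN hιX hιinj σ hσ.2
    refine ⟨τ, ⟨isAutO_of τ, hτ⟩, ?_⟩
    rintro τ' ⟨-, hτ'⟩
    exact AlgEquiv.ext fun f =>
      hιinj ((AlgHom.congr_fun hτ' f).trans (AlgHom.congr_fun hτ f).symm)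
  · -- homomorphism
    intro σ₁ σ₂ τ₁ τ₂ _ _ h1 h2
    apply AlgHom.ext
    intro f
    have e1 := AlgHom.congr_fun h1 (τ₂ f)
    have e2 := AlgHom.congr_fun h2 f
    show ι (τ₁ (τ₂ f)) = σ₁ (σ₂ (ι f))
    exact e1.trans (congrArg _ e2)
  · -- surjectivity
    intro τ _
    obtain ⟨σ, hr, hc⟩ := exists_sigma hN hιX τ
    exact ⟨σ, ⟨isAutO_of σ, hr⟩, hc⟩
  · -- kernel description
    intro σ hσ
    constructor
    · exact kernel_eps hN hιX σ
    · rintro ⟨ε, hεN, hσX⟩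
      exact kernel_of_eps hN hιX σ hεN hσX
  · -- cardinality
    have hT : {ε : ℂ | ε ^ N = 1}.ncard = N := by
      have hprim := Complex.isPrimitiveRoot_exp N hN.ne'
      have hTe : {ε : ℂ | ε ^ N = 1} = ↑(Polynomial.nthRootsFinset N (1 : ℂ)) := by
        ext x
        simp [Polynomial.mem_nthRootsFinset hN]
      rw [hTe, Set.ncard_coe_finset, hprim.card_nthRootsFinset]
    set S := {σ : PowerSeries ℂ ≃ₐ[ℂ] PowerSeries ℂ |
        IsAutNO ι σ ∧ (σ.toAlgHom).comp ι = ι} with hS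
    have himg : (fun σ : PowerSeries ℂ ≃ₐ[ℂ] PowerSeries ℂ =>
        coeff 1 (σ PowerSeries.X)) '' S = {ε : ℂ | ε ^ N = 1} := by
      ext ε
      constructor
      · rintro ⟨σ, hσ, rfl⟩
        obtain ⟨ε', hε', hσX⟩ := kernel_eps hN hιX σ hσ.2
        show coeff 1 (σ PowerSeries.X) ^ N = 1
        rw [hσX, coeff_C_mul, coeff_one_X, mul_one]
        exact hε'
      · intro hε
        have hε0 : ε ≠ 0 := fun h =>
          one_ne_zero (by rw [← hε, h, zero_pow hN.ne'] : (1 : ℂ) = 0)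
        have hk := kernel_of_eps hN hιX (epsEquiv ε hε0) hε (epsEquiv_X ε hε0)
        refine ⟨epsEquiv ε hε0, ⟨⟨isAutO_of _, fun f => ⟨f, (AlgHom.congr_fun hk f).symm⟩⟩, hk⟩, ?_⟩
        show coeff 1 ((epsEquiv ε hε0) PowerSeries.X) = ε
        rw [epsEquiv_X, coeff_C_mul, coeff_one_X, mul_one]
    have hinj : Set.InjOn (fun σ : PowerSeries ℂ ≃ₐ[ℂ] PowerSeries ℂ =>
        coeff 1 (σ PowerSeries.X)) S := by
      intro σ₁ h₁ σ₂ h₂ he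
      obtain ⟨ε₁, hε₁, hX₁⟩ := kernel_eps hN hιX σ₁ h₁.2
      obtain ⟨ε₂, hε₂, hX₂⟩ := kernel_eps hN hιX σ₂ h₂.2
      have e1 : coeff 1 (σ₁ PowerSeries.X) = ε₁ := by
        rw [hX₁, coeff_C_mul, coeff_one_X, mul_one]
      have e2 : coeff 1 (σ₂ PowerSeries.X) = ε₂ := by
        rw [hX₂, coeff_C_mul, coeff_one_X, mul_one]
      have hee : ε₁ = ε₂ := by rw [← e1, ← e2]; exact he
      apply equiv_eq_of_X
      rw [hX₁, hX₂, hee]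
    calc S.ncard = ((fun σ : PowerSeries ℂ ≃ₐ[ℂ] PowerSeries ℂ =>
          coeff 1 (σ PowerSeries.X)) '' S).ncard := (Set.ncard_image_of_injOn hinj).symm
      _ = N := by rw [himg, hT]
  · -- generator
    intro ε hεprim σ hσ hk
    obtain ⟨ε', hε', hσX⟩ := kernel_eps hN hιX σ hk
    haveI : NeZero N := ⟨hN.ne'⟩
    obtain ⟨k, -, hkk⟩ := hεprim.eq_pow_of_pow_eq_one hε'
    exact ⟨k, by rw [hσX, hkk]⟩
end

section
/- An automorphism ρ of C[[t]] with ρ(t) = ∑_{n≥1} c_n t^n preserves the subalgebra C[[t^N]] if and only if c_n = 0 for all n not congruent to 1 modulo N, i.e., ρ(t) = ∑_{k≥0} c_{kN+1} t^{kN+1}. -/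
open PowerSeries

section Helpers


lemma aeval_X_coe (p : Polynomial ℂ) : Polynomial.aeval (PowerSeries.X : PowerSeries ℂ) p = ↑p := by
  rw [Polynomial.aeval_def, ← Polynomial.eval₂_C_X_eq_coe]
  rfl

lemma coeff_algHom_apply (φ : PowerSeries ℂ →ₐ[ℂ] PowerSeries ℂ)
    (hφ : (PowerSeries.X : PowerSeries ℂ) ∣ φ PowerSeries.X) (f : PowerSeries ℂ) (d : ℕ) :
    coeff d (φ f) = coeff d (Polynomial.aeval (φ PowerSeries.X) (trunc (d+1) f)) := by
  obtain ⟨r, hr⟩ : X ^ (d+1) ∣ f - ((trunc (d+1) f : Polynomial ℂ) : PowerSeries ℂ) := by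
    rw [X_pow_dvd_iff]
    intro m hm
    simp [Polynomial.coeff_coe, coeff_trunc, hm]
  have hf : f = ((trunc (d+1) f : Polynomial ℂ) : PowerSeries ℂ) + X^(d+1) * r := by
    rw [← hr]; ring
  have h2 : φ f = Polynomial.aeval (φ X) (trunc (d+1) f) + (φ X)^(d+1) * φ r := by
    rw [Polynomial.aeval_algHom_apply, aeval_X_coe]
    rw [show φ ((trunc (d+1) f : Polynomial ℂ) : PowerSeries ℂ) + (φ X)^(d+1) * φ r
      = φ (((trunc (d+1) f : Polynomial ℂ) : PowerSeries ℂ) + X^(d+1) * r) by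
        rw [map_add, map_mul, map_pow]]
    rw [← hf]
  rw [h2, map_add]
  have h3 : coeff d ((φ X)^(d+1) * φ r) = 0 := by
    have : X ^ (d+1) ∣ (φ X)^(d+1) * φ r :=
      dvd_mul_of_dvd_left (pow_dvd_pow_of_dvd hφ _) _
    exact X_pow_dvd_iff.mp this d (by omega)
  rw [h3, add_zero]

lemma coeff_aeval (s : PowerSeries ℂ) (P : Polynomial ℂ) (d : ℕ) :
    coeff d (Polynomial.aeval s P)
      = ∑ i ∈ Finset.range (P.natDegree + 1), P.coeff i * coeff d (s ^ i) := by
  rw [Polynomial.aeval_eq_sum_range, map_sum]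
  simp

/-- support of `f` is contained in residues `≡ r mod N`. -/
def SC (N : ℕ) (f : PowerSeries ℂ) (r : ℕ) : Prop :=
  ∀ i : ℕ, ¬ i ≡ r [MOD N] → coeff i f = 0

lemma SC.mul {N : ℕ} {f h : PowerSeries ℂ} {r s : ℕ} (hf : SC N f r) (hh : SC N h s) :
    SC N (f * h) (r + s) := by
  intro i hi
  rw [coeff_mul]
  apply Finset.sum_eq_zero
  rintro ⟨a, b⟩ hab
  rw [Finset.HasAntidiagonal.mem_antidiagonal] at hab
  by_cases ha : a ≡ r [MOD N]
  · by_cases hb : b ≡ s [MOD N]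
    · exact absurd (hab ▸ ha.add hb) hi
    · rw [hh b hb, mul_zero]
  · rw [hf a ha, zero_mul]

lemma SC.one {N : ℕ} : SC N (1 : PowerSeries ℂ) 0 := by
  intro i hi
  have : i ≠ 0 := by rintro rfl; exact hi (Nat.ModEq.refl 0)
  simp [coeff_one, this]

lemma SC.pow {N : ℕ} {f : PowerSeries ℂ} (hf : SC N f 1) (k : ℕ) : SC N (f ^ k) k := by
  induction k with
  | zero => simpa using SC.one
  | succ k ih =>
      have := ih.mul hf
      rwa [← pow_succ] at this

lemma coeff_pow_lt {a : PowerSeries ℂ} (h0 : coeff 0 a = 0) (k : ℕ) :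
    ∀ j < k, coeff j (a ^ k) = 0 := by
  have hX : (X : PowerSeries ℂ) ∣ a := by
    rw [X_dvd_iff, ← coeff_zero_eq_constantCoeff_apply]; exact h0
  intro j hj
  exact X_pow_dvd_iff.mp (pow_dvd_pow_of_dvd hX k) j hj

lemma coeff_pow_self {a : PowerSeries ℂ} (h0 : coeff 0 a = 0) (k : ℕ) :
    coeff k (a ^ k) = (coeff 1 a) ^ k := by
  induction k with
  | zero => simp
  | succ k ih =>
      rw [pow_succ, mul_comm, coeff_mul]
      rw [Finset.sum_eq_single (1, k)]
      · rw [ih, pow_succ, mul_comm]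
      · rintro ⟨i, j⟩ hij hne
        rw [Finset.HasAntidiagonal.mem_antidiagonal] at hij
        rcases Nat.eq_zero_or_pos i with hi | hi
        · subst hi; rw [h0, zero_mul]
        · have : j < k := by
            rcases Nat.lt_or_ge j k with h | h
            · exact h
            · exfalso; apply hne
              have : j = k := by omega
              subst this
              have : i = 1 := by omega
              simp [this]
          rw [coeff_pow_lt h0 k j this, mul_zero]
      · intro h
        exfalso; exact h (by rw [Finset.HasAntidiagonal.mem_antidiagonal]; omega)

lemma coeff_iota_not_dvd {N : ℕ} (hN : 0 < N) (ι : PowerSeries ℂ →ₐ[ℂ] PowerSeries ℂ)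
    (hιX : ι PowerSeries.X = PowerSeries.X ^ N) (h : PowerSeries ℂ) {d : ℕ} (hd : ¬ N ∣ d) :
    coeff d (ι h) = 0 := by
  have hdvd : (X : PowerSeries ℂ) ∣ ι X := hιX ▸ dvd_pow_self X hN.ne'
  rw [coeff_algHom_apply ι hdvd, hιX, coeff_aeval]
  apply Finset.sum_eq_zero
  intro i _
  rw [← pow_mul, coeff_X_pow]
  have : d ≠ N * i := fun h => hd (h ▸ ⟨i, rfl⟩)
  simp [this]

lemma coeff_iota_mul {N : ℕ} (hN : 0 < N) (ι : PowerSeries ℂ →ₐ[ℂ] PowerSeries ℂ)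
    (hιX : ι PowerSeries.X = PowerSeries.X ^ N) (h : PowerSeries ℂ) (k : ℕ) :
    coeff (N * k) (ι h) = coeff k h := by
  have hdvd : (X : PowerSeries ℂ) ∣ ι X := hιX ▸ dvd_pow_self X hN.ne'
  have hkNk : k ≤ N * k := Nat.le_mul_of_pos_left k hN
  rw [coeff_algHom_apply ι hdvd, hιX, coeff_aeval]
  set P := trunc (N*k+1) h with hP
  have hstep : ∀ i ∈ Finset.range (P.natDegree + 1),
      P.coeff i * coeff (N*k) ((X^N)^i) = if i = k then P.coeff i else 0 := by
    intro i _
    rw [← pow_mul, coeff_X_pow]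
    by_cases h' : i = k
    · subst h'; simp
    · have : N*k ≠ N*i := fun e => h' (Nat.eq_of_mul_eq_mul_left hN e).symm
      simp [this, h']
  rw [Finset.sum_congr rfl hstep, Finset.sum_ite_eq' (Finset.range (P.natDegree + 1)) k]
  by_cases hk : k ∈ Finset.range (P.natDegree + 1)
  · rw [if_pos hk, hP, coeff_trunc, if_pos (by omega)]
  · rw [if_neg hk]
    have h1 : P.coeff k = 0 := Polynomial.coeff_eq_zero_of_natDegree_lt
      (by simp only [Finset.mem_range] at hk; omega)
    rw [hP, coeff_trunc, if_pos (by omega)] at h1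
    exact h1.symm

lemma range_iota {N : ℕ} (hN : 0 < N) (ι : PowerSeries ℂ →ₐ[ℂ] PowerSeries ℂ)
    (hιX : ι PowerSeries.X = PowerSeries.X ^ N) (F : PowerSeries ℂ) :
    F ∈ Set.range ι ↔ ∀ d, ¬ N ∣ d → coeff d F = 0 := by
  constructor
  · rintro ⟨h, rfl⟩ d hd; exact coeff_iota_not_dvd hN ι hιX h hd
  · intro hF
    refine ⟨mk (fun k => coeff (N*k) F), ?_⟩
    ext d
    by_cases hd : N ∣ d
    · obtain ⟨k, rfl⟩ := hd
      rw [coeff_iota_mul hN ι hιX, coeff_mk]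
    · rw [coeff_iota_not_dvd hN ι hιX _ hd, hF d hd]

end Helpers

/-- An automorphism `ρ` of `ℂ[[t]]` with `ρ(t) = ∑_{n≥1} c_n t^n` preserves the
subalgebra `ℂ[[t^N]]` (realized as the range of `ι : ℂ[[z]] → ℂ[[t]]`, `z ↦ t^N`)
if and only if `c_n = 0` for all `n` not congruent to `1` modulo `N`, i.e.
`ρ(t) = ∑_{k≥0} c_{kN+1} t^{kN+1}`. -/
theorem preserves_tN_iff_coeff (N : ℕ) (hN : 0 < N)
    (ι : PowerSeries ℂ →ₐ[ℂ] PowerSeries ℂ)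
    (hιX : ι PowerSeries.X = PowerSeries.X ^ N)
    (hιcont : @Continuous _ _ tadic tadic ι) (hιinj : Function.Injective ι)
    (ρ : PowerSeries ℂ ≃ₐ[ℂ] PowerSeries ℂ) (hρ : IsAutO ρ) :
    (∀ f, ρ (ι f) ∈ Set.range ι) ↔
      ∀ n : ℕ, ¬ n ≡ 1 [MOD N] → PowerSeries.coeff n (ρ PowerSeries.X) = 0 := by
  classical
  set g := ρ PowerSeries.X with hgdef
  have hgX : (X : PowerSeries ℂ) ∣ g :=
    Ideal.mem_span_singleton.mp (hρ.2 X (Ideal.mem_span_singleton.mpr dvd_rfl))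
  have hg0 : coeff 0 g = 0 := by
    obtain ⟨r, hr⟩ := hgX
    rw [hr, coeff_zero_eq_constantCoeff, map_mul, constantCoeff_X, zero_mul]
  constructor
  · -- forward direction
    intro H n hn
    by_contra hc
    have hN2 : 2 ≤ N := by
      rcases Nat.lt_or_ge N 2 with h | h
      · have hN1 : N = 1 := by omega
        subst hN1
        exact (hn Nat.modEq_one).elim
      · exact h
    -- c₁ ≠ 0
    have hg1 : coeff 1 g ≠ 0 := by
      intro h1
      obtain ⟨f, hf⟩ := ρ.surjective PowerSeries.X
      have hX2 : (X : PowerSeries ℂ)^2 ∣ g := by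
        rw [X_pow_dvd_iff]
        intro m hm
        interval_cases m
        · exact hg0
        · exact h1
      have hzero : coeff 1 (ρ f) = 0 := by
        have hcast : ρ f = ρ.toAlgHom f := rfl
        rw [hcast, coeff_algHom_apply ρ.toAlgHom hgX, coeff_aeval]
        apply Finset.sum_eq_zero
        intro i _
        have hz : coeff 1 ((ρ.toAlgHom PowerSeries.X) ^ i) = 0 := by
          show coeff 1 (g ^ i) = 0
          cases i with
          | zero => simp
          | succ i =>
              have : (X : PowerSeries ℂ)^2 ∣ g ^ (i+1) :=
                dvd_trans hX2 (dvd_pow_self g (Nat.succ_ne_zero i))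
              exact X_pow_dvd_iff.mp this 1 (by omega)
        rw [hz, mul_zero]
      rw [hf] at hzero
      simp at hzero
    -- minimal bad index
    have hex : ∃ m, ¬ m ≡ 1 [MOD N] ∧ coeff m g ≠ 0 := ⟨n, hn, hc⟩
    obtain ⟨n₀, hn₀bad, hn₀ne, hmin⟩ :
        ∃ n₀, ¬ n₀ ≡ 1 [MOD N] ∧ coeff n₀ g ≠ 0 ∧
          ∀ m < n₀, ¬ m ≡ 1 [MOD N] → coeff m g = 0 := by
      refine ⟨Nat.find hex, (Nat.find_spec hex).1, (Nat.find_spec hex).2, ?_⟩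
      intro m hm hb
      by_contra h
      exact Nat.find_min hex hm ⟨hb, h⟩
    have hn₀2 : 2 ≤ n₀ := by
      rcases n₀ with _ | _ | m
      · exact (hn₀ne hg0).elim
      · exact (hn₀bad (Nat.ModEq.refl 1)).elim
      · omega
    -- split g = a + b
    set a : PowerSeries ℂ := mk (fun i => if i ≡ 1 [MOD N] then coeff i g else 0) with hadef
    set b : PowerSeries ℂ := g - a with hbdef
    have hab : a + b = g := by rw [hbdef]; ring
    have ha : SC N a 1 := by
      intro i hi
      rw [hadef, coeff_mk, if_neg hi]
    have hnot01 : ¬ (0 : ℕ) ≡ 1 [MOD N] := by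
      unfold Nat.ModEq
      rw [Nat.zero_mod, Nat.mod_eq_of_lt hN2]
      omega
    have ha0 : coeff 0 a = 0 := by rw [hadef, coeff_mk, if_neg hnot01]
    have ha1 : coeff 1 a = coeff 1 g := by
      rw [hadef, coeff_mk, if_pos (Nat.ModEq.refl 1)]
    have hb_low : ∀ j < n₀, coeff j b = 0 := by
      intro j hj
      rw [hbdef, map_sub, hadef, coeff_mk]
      by_cases hj1 : j ≡ 1 [MOD N]
      · rw [if_pos hj1, sub_self]
      · rw [if_neg hj1, hmin j hj hj1, sub_zero]
    have hbn : coeff n₀ b = coeff n₀ g := by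
      rw [hbdef, map_sub, hadef, coeff_mk, if_neg hn₀bad, sub_zero]
    have hXa : (X : PowerSeries ℂ) ∣ a := by
      rw [X_dvd_iff, ← coeff_zero_eq_constantCoeff_apply]; exact ha0
    have hXb : (X : PowerSeries ℂ)^n₀ ∣ b := by
      rw [X_pow_dvd_iff]; exact hb_low
    -- g^N supported on multiples of N
    have hGS : ∀ d, ¬ N ∣ d → coeff d (g ^ N) = 0 := by
      intro d hd
      have hmem := H PowerSeries.X
      rw [hιX, map_pow, ← hgdef] at hmem
      exact (range_iota hN ι hιX _).mp hmem d hd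
    set d₀ := n₀ + (N - 1) with hd₀def
    have hd₀ : ¬ N ∣ d₀ := by
      intro hdvd
      apply hn₀bad
      have h1 : N ∣ N + (n₀ - 1) := by
        have he : d₀ = N + (n₀ - 1) := by omega
        rwa [he] at hdvd
      have h2 : N ∣ n₀ - 1 := (Nat.dvd_add_right (dvd_refl N)).mp h1
      exact ((Nat.modEq_iff_dvd' (by omega : 1 ≤ n₀)).mpr h2).symm
    have hsum : coeff d₀ ((a + b) ^ N)
        = (coeff 1 a)^(N-1) * coeff n₀ b * (N : ℂ) := by
      rw [add_pow, map_sum]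
      rw [Finset.sum_eq_single_of_mem (N-1) (Finset.mem_range.mpr (by omega))]
      · have hNN : N - (N-1) = 1 := by omega
        have hch : N.choose (N-1) = N := by
          rw [Nat.choose_symm (by omega : 1 ≤ N), Nat.choose_one_right]
        rw [hNN, pow_one, hch, ← map_natCast (C (R := ℂ)) N, coeff_mul_C]
        congr 1
        rw [coeff_mul, Finset.sum_eq_single_of_mem ((N-1 : ℕ), n₀)
          (Finset.HasAntidiagonal.mem_antidiagonal.mpr (by show N - 1 + n₀ = d₀; omega))]
        · rw [coeff_pow_self ha0]
        · rintro ⟨i, j⟩ hij hne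
          rw [Finset.HasAntidiagonal.mem_antidiagonal] at hij
          rcases lt_trichotomy i (N-1) with h | h | h
          · have hzero : coeff i (a ^ (N-1)) = 0 := by
              refine (ha.pow (N-1)) i ?_
              intro hmod
              unfold Nat.ModEq at hmod
              rw [Nat.mod_eq_of_lt (by omega), Nat.mod_eq_of_lt (by omega)] at hmod
              omega
            rw [hzero, zero_mul]
          · exfalso; apply hne
            have hj' : j = n₀ := by omega
            simp [h, hj']
          · rw [hb_low j (by omega), mul_zero]
      · intro k hk hne
        rw [Finset.mem_range] at hk
        rcases eq_or_lt_of_le (Nat.lt_succ_iff.mp hk) with hkN | hkN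
        · rw [hkN, Nat.sub_self, pow_zero, Nat.choose_self, Nat.cast_one, mul_one, mul_one]
          refine (ha.pow N) d₀ ?_
          intro hmod
          refine hd₀ (Nat.modEq_zero_iff_dvd.mp ?_)
          exact hmod.trans (Nat.modEq_zero_iff_dvd.mpr dvd_rfl)
        · -- k ≤ N - 2
          have hk2 : k ≤ N - 2 := by omega
          have hdvd : (X : PowerSeries ℂ) ^ (k + n₀ * (N - k)) ∣
              a ^ k * b ^ (N - k) * (N.choose k : PowerSeries ℂ) := by
            apply dvd_mul_of_dvd_left
            rw [pow_add]
            exact mul_dvd_mul (pow_dvd_pow_of_dvd hXa k)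
              (by rw [pow_mul]; exact pow_dvd_pow_of_dvd hXb (N - k))
          refine X_pow_dvd_iff.mp hdvd d₀ ?_
          have hsplit : N - k = (N - k - 1) + 1 := by omega
          have hmul : n₀ * (N - k) = n₀ * (N - k - 1) + n₀ := by
            conv_lhs => rw [hsplit]
            rw [Nat.mul_succ]
          have hlow : 2 * (N - k - 1) ≤ n₀ * (N - k - 1) :=
            Nat.mul_le_mul_right _ (by omega)
          omega
    have hfinal := hGS d₀ hd₀
    rw [← hab, hsum, ha1, hbn] at hfinal
    rcases mul_eq_zero.mp hfinal with h | h
    · rcases mul_eq_zero.mp h with h' | h'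
      · exact hg1 (pow_eq_zero_iff (by omega : N - 1 ≠ 0) |>.mp h')
      · exact hn₀ne h'
    · exact (Nat.cast_ne_zero.mpr hN.ne' : (N:ℂ) ≠ 0) h
  · -- reverse direction
    intro hcoeff f
    rw [range_iota hN ι hιX]
    intro d hd
    have hSC : SC N g 1 := fun i hi => hcoeff i hi
    have hψX : (ρ.toAlgHom.comp ι) PowerSeries.X = g ^ N := by
      simp [AlgHom.comp_apply, hιX, map_pow, hgdef]
    have hXψ : (X : PowerSeries ℂ) ∣ (ρ.toAlgHom.comp ι) PowerSeries.X := by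
      rw [hψX]; exact dvd_pow hgX hN.ne'
    have hcast : ρ (ι f) = (ρ.toAlgHom.comp ι) f := rfl
    rw [hcast, coeff_algHom_apply _ hXψ, hψX, coeff_aeval]
    apply Finset.sum_eq_zero
    intro i _
    have hz : coeff d ((g ^ N) ^ i) = 0 := by
      rw [← pow_mul]
      refine (hSC.pow (N * i)) d ?_
      intro hmod
      refine hd (Nat.modEq_zero_iff_dvd.mp ?_)
      exact hmod.trans (Nat.modEq_zero_iff_dvd.mpr ⟨i, rfl⟩)
    rw [hz, mul_zero]
end
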